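/- Suppose M symmetric positive definite, A, B symmetric positive semidefinite, τ, h > 0, and λ_max(A) ≤ C_A, λ_max(B) ≤ C_B, λ_min(M) ≥ C_M h². If τ < 2 C_M h²/(C_A + C_B), then every eigenvalue λ of the block matrix [[M, 0],[0, M]]⁻¹[[M, τA],[−τB, M]] satisfies |λ − 1| < 1; in particular this matrix is invertible. -/

import Mathlib

open Matrix

namespace Stmt12Aux

variable {k : Type*} [Fintype k] [DecidableEq k]

noncomputable def nsq (x : k → ℂ) : ℝ := ∑ i, Complex.normSq (x i)

lemma nsq_nonneg (x : k → ℂ) : 0 ≤ nsq x :=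
  Finset.sum_nonneg fun i _ => Complex.normSq_nonneg _

lemma nsq_pos {x : k → ℂ} (hx : x ≠ 0) : 0 < nsq x := by
  obtain ⟨i, hi⟩ := Function.ne_iff.mp hx
  refine Finset.sum_pos' (fun j _ => Complex.normSq_nonneg _) ⟨i, Finset.mem_univ i, ?_⟩
  exact Complex.normSq_pos.mpr (by simpa using hi)

lemma star_dot_self (x : k → ℂ) : star x ⬝ᵥ x = (nsq x : ℂ) := by
  simp only [dotProduct, Pi.star_apply, nsq, Complex.ofReal_sum]
  exact Finset.sum_congr rfl fun i _ => by
    rw [Complex.star_def, mul_comm, Complex.mul_conj]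

lemma conjTranspose_map_real (U : Matrix k k ℝ) :
    (U.map ((↑) : ℝ → ℂ))ᴴ = (star U).map ((↑) : ℝ → ℂ) := by
  ext i j
  simp [conjTranspose_apply, Matrix.map_apply, Complex.conj_ofReal, star_apply]

lemma map_real_mul (X Y : Matrix k k ℝ) :
    ((X * Y).map ((↑) : ℝ → ℂ)) = X.map ((↑) : ℝ → ℂ) * Y.map ((↑) : ℝ → ℂ) :=
  Matrix.map_mul (f := Complex.ofRealHom)

section Spectral

variable {S : Matrix k k ℝ} (hS : S.IsHermitian) (x y : k → ℂ)

/-- complexified eigenvector unitary -/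
noncomputable def Uc (hS : S.IsHermitian) : Matrix k k ℂ :=
  (hS.eigenvectorUnitary : Matrix k k ℝ).map ((↑) : ℝ → ℂ)

lemma spectral_c : S.map ((↑) : ℝ → ℂ)
    = Uc hS * diagonal (fun i => (hS.eigenvalues i : ℂ)) * (Uc hS)ᴴ := by
  unfold Uc
  conv_lhs => rw [hS.spectral_theorem, Unitary.conjStarAlgAut_apply]
  rw [map_real_mul, map_real_mul, ← conjTranspose_map_real]
  congr 1
  ext i j
  simp [Matrix.map_apply, Matrix.diagonal_apply, apply_ite ((↑) : ℝ → ℂ)]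

lemma Uc_mul_star : Uc hS * (Uc hS)ᴴ = 1 := by
  unfold Uc
  rw [conjTranspose_map_real, ← map_real_mul,
    (Matrix.mem_unitaryGroup_iff).mp (hS.eigenvectorUnitary).2]
  ext i j
  simp [Matrix.map_apply, Matrix.one_apply]
  split <;> simp

lemma dot_Uc_mulVec (z : k → ℂ) :
    star x ⬝ᵥ (Uc hS *ᵥ z) = star ((Uc hS)ᴴ *ᵥ x) ⬝ᵥ z := by
  rw [dotProduct_mulVec, star_mulVec, conjTranspose_conjTranspose]

lemma nsq_star_mulVec : nsq ((Uc hS)ᴴ *ᵥ x) = nsq x := by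
  have h : star ((Uc hS)ᴴ *ᵥ x) ⬝ᵥ ((Uc hS)ᴴ *ᵥ x) = star x ⬝ᵥ x := by
    rw [← dot_Uc_mulVec, mulVec_mulVec, Uc_mul_star, one_mulVec]
  rw [star_dot_self, star_dot_self] at h
  exact_mod_cast h

lemma quad_repr :
    star x ⬝ᵥ (S.map ((↑) : ℝ → ℂ)) *ᵥ y
      = ∑ i, (hS.eigenvalues i : ℂ) *
          (star ((Uc hS)ᴴ *ᵥ x) i * (((Uc hS)ᴴ *ᵥ y) i)) := by
  rw [spectral_c hS, ← mulVec_mulVec, ← mulVec_mulVec, dot_Uc_mulVec]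
  simp only [dotProduct, mulVec_diagonal, Pi.star_apply]
  exact Finset.sum_congr rfl fun i _ => by ring

lemma quad_lower {m : ℝ} (hm : ∀ i, m ≤ hS.eigenvalues i) :
    m * nsq x ≤ (star x ⬝ᵥ (S.map ((↑) : ℝ → ℂ)) *ᵥ x).re := by
  rw [quad_repr hS x x]
  set u := (Uc hS)ᴴ *ᵥ x with hu
  have : (∑ i, (hS.eigenvalues i : ℂ) * (star u i * u i)).re
      = ∑ i, hS.eigenvalues i * Complex.normSq (u i) := by
    rw [Complex.re_sum]
    refine Finset.sum_congr rfl fun i _ => ?_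
    rw [Pi.star_apply, Complex.star_def, mul_comm ((starRingEnd ℂ) (u i)), Complex.mul_conj,
      ← Complex.ofReal_mul]
    exact Complex.ofReal_re _
  rw [this, ← nsq_star_mulVec hS x, ← hu, nsq, Finset.mul_sum]
  exact Finset.sum_le_sum fun i _ =>
    mul_le_mul_of_nonneg_right (hm i) (Complex.normSq_nonneg _)

lemma quad_upper {c : ℝ} (hc : 0 ≤ c) (habs : ∀ i, |hS.eigenvalues i| ≤ c) :
    ‖star x ⬝ᵥ (S.map ((↑) : ℝ → ℂ)) *ᵥ y‖
      ≤ c * (Real.sqrt (nsq x) * Real.sqrt (nsq y)) := by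
  rw [quad_repr hS x y]
  set u := (Uc hS)ᴴ *ᵥ x with hu
  set w := (Uc hS)ᴴ *ᵥ y with hw
  calc ‖∑ i, (hS.eigenvalues i : ℂ) * (star u i * w i)‖
      ≤ ∑ i, ‖(hS.eigenvalues i : ℂ) * (star u i * w i)‖ := by
        exact norm_sum_le _ _
    _ ≤ ∑ i, c * (‖u i‖ * ‖w i‖) := by
        refine Finset.sum_le_sum fun i _ => ?_
        rw [norm_mul, norm_mul, Pi.star_apply, Complex.star_def,
          Complex.norm_conj, Complex.norm_real, Real.norm_eq_abs]
        exact mul_le_mul (habs i) le_rfl (by positivity) hc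
    _ = c * ∑ i, ‖u i‖ * ‖w i‖ := by rw [Finset.mul_sum]
    _ ≤ c * (Real.sqrt (nsq u) * Real.sqrt (nsq w)) := by
        refine mul_le_mul_of_nonneg_left ?_ hc
        have := Real.sum_mul_le_sqrt_mul_sqrt Finset.univ
          (fun i => ‖u i‖) (fun i => ‖w i‖)
        simpa only [nsq, Complex.sq_norm] using this
    _ = c * (Real.sqrt (nsq x) * Real.sqrt (nsq y)) := by
        rw [hu, hw, nsq_star_mulVec hS x, nsq_star_mulVec hS y]

end Spectral

end Stmt12Aux
set_option maxHeartbeats 1000000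

open Stmt12Aux in
/-- If `τ < 2C_M h²/(C_A + C_B)`, every eigenvalue `λ` of
`[[M,0],[0,M]]⁻¹[[M, τA],[−τB, M]]` satisfies `|λ − 1| < 1`; in particular,
this matrix is invertible. -/
theorem stmt_12 {n : ℕ} (A B M : Matrix (Fin n) (Fin n) ℝ)
    (hM : M.PosDef) (hA : A.PosSemidef) (hB : B.PosSemidef)
    (τ h C_A C_B C_M : ℝ) (hτ : 0 < τ) (hh : 0 < h)
    (hCA : 0 < C_A) (hCB : 0 < C_B) (hCM : 0 < C_M)
    (hAmax : ∀ i, hA.1.eigenvalues i ≤ C_A)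
    (hBmax : ∀ i, hB.1.eigenvalues i ≤ C_B)
    (hMmin : ∀ i, C_M * h ^ 2 ≤ hM.1.eigenvalues i)
    (hsmall : τ < 2 * C_M * h ^ 2 / (C_A + C_B)) :
    (∀ z ∈ spectrum ℂ
        (((Matrix.fromBlocks M 0 0 M)⁻¹ *
          Matrix.fromBlocks M (τ • A) (-(τ • B)) M).map ((↑) : ℝ → ℂ)),
      ‖z - 1‖ < 1) ∧
    IsUnit ((Matrix.fromBlocks M 0 0 M)⁻¹ *
        Matrix.fromBlocks M (τ • A) (-(τ • B)) M).det := by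
  -- notation
  set P : Matrix (Fin n ⊕ Fin n) (Fin n ⊕ Fin n) ℝ := Matrix.fromBlocks M 0 0 M with hP
  set Q : Matrix (Fin n ⊕ Fin n) (Fin n ⊕ Fin n) ℝ :=
    Matrix.fromBlocks M (τ • A) (-(τ • B)) M with hQ
  have hPdet : IsUnit P.det := by
    rw [hP, Matrix.det_fromBlocks_zero₂₁]
    exact (mul_pos hM.det_pos hM.det_pos).ne'.isUnit
  have hPP : P * P⁻¹ = 1 := Matrix.mul_nonsing_inv _ hPdet
  set T : Matrix (Fin n ⊕ Fin n) (Fin n ⊕ Fin n) ℝ := P⁻¹ * Q with hT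
  set Tc := T.map ((↑) : ℝ → ℂ) with hTc
  have hPT : (P.map ((↑) : ℝ → ℂ)) * Tc = Q.map ((↑) : ℝ → ℂ) := by
    rw [hTc, hT, map_real_mul, ← mul_assoc, ← map_real_mul, hPP]
    ext i j
    simp [Matrix.map_apply, Matrix.one_apply, apply_ite ((↑) : ℝ → ℂ)]
  have hτsum : τ * (C_A + C_B) < 2 * (C_M * h ^ 2) := by
    rw [lt_div_iff₀ (by positivity)] at hsmall
    nlinarith
  have part1 : ∀ z ∈ spectrum ℂ Tc, ‖z - 1‖ < 1 := by
    intro z hz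
    -- eigenvector
    have hz' : Module.End.HasEigenvalue (Matrix.toLinAlgEquiv' Tc) z := by
      rw [Module.End.hasEigenvalue_iff_mem_spectrum, AlgEquiv.spectrum_eq]
      exact hz
    obtain ⟨v, hv⟩ := hz'.exists_hasEigenvector
    have hveq : Tc *ᵥ v = z • v := by
      have := hv.apply_eq_smul
      rwa [Matrix.toLinAlgEquiv'_apply] at this
    set x : Fin n → ℂ := v ∘ Sum.inl with hx
    set y : Fin n → ℂ := v ∘ Sum.inr with hy
    have hvel : v = Sum.elim x y := by funext i; cases i <;> rfl
    set Mc := M.map ((↑) : ℝ → ℂ) with hMc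
    set Ac := A.map ((↑) : ℝ → ℂ) with hAc
    set Bc := B.map ((↑) : ℝ → ℂ) with hBc
    have hAτ : (τ • A).map ((↑) : ℝ → ℂ) = (τ : ℂ) • Ac := by
      ext i j; simp [Matrix.map_apply, hAc]
    have hBτ : (-(τ • B)).map ((↑) : ℝ → ℂ) = -((τ : ℂ) • Bc) := by
      ext i j; simp [Matrix.map_apply, hBc]
    have h0map : (0 : Matrix (Fin n) (Fin n) ℝ).map ((↑) : ℝ → ℂ) = 0 := by
      ext i j; simp
    have hQc : Q.map ((↑) : ℝ → ℂ)
        = Matrix.fromBlocks Mc ((τ : ℂ) • Ac) (-((τ : ℂ) • Bc)) Mc := by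
      rw [hQ, Matrix.fromBlocks_map, hAτ, hBτ]
    have hPc : P.map ((↑) : ℝ → ℂ) = Matrix.fromBlocks Mc 0 0 Mc := by
      rw [hP, Matrix.fromBlocks_map, h0map]
    have hmain : Q.map ((↑) : ℝ → ℂ) *ᵥ v = z • (P.map ((↑) : ℝ → ℂ) *ᵥ v) := by
      rw [← hPT, ← Matrix.mulVec_mulVec, hveq, Matrix.mulVec_smul]
    rw [hQc, hPc, hvel, Matrix.fromBlocks_mulVec, Matrix.fromBlocks_mulVec] at hmain
    have E1 : Mc *ᵥ x + (τ : ℂ) • (Ac *ᵥ y) = z • (Mc *ᵥ x) := by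
      funext i
      have := congrFun hmain (Sum.inl i)
      simpa [Matrix.smul_mulVec] using this
    have E2 : -((τ : ℂ) • (Bc *ᵥ x)) + Mc *ᵥ y = z • (Mc *ᵥ y) := by
      funext i
      have := congrFun hmain (Sum.inr i)
      simpa [Matrix.smul_mulVec, Matrix.neg_mulVec] using this
    -- dot products
    set qx := star x ⬝ᵥ (Mc *ᵥ x) with hqx
    set qy := star y ⬝ᵥ (Mc *ᵥ y) with hqy
    set qA := star x ⬝ᵥ (Ac *ᵥ y) with hqA
    set qB := star y ⬝ᵥ (Bc *ᵥ x) with hqB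
    have D1 : qx + (τ : ℂ) * qA = z * qx := by
      have := congrArg (fun w => star x ⬝ᵥ w) E1
      simpa [dotProduct_add, dotProduct_smul, smul_eq_mul] using this
    have D2 : -((τ : ℂ) * qB) + qy = z * qy := by
      have := congrArg (fun w => star y ⬝ᵥ w) E2
      simpa [dotProduct_add, dotProduct_smul, dotProduct_neg,
        smul_eq_mul] using this
    have key : (z - 1) * (qx + qy) = (τ : ℂ) * (qA - qB) := by linear_combination (-1 : ℂ) * D1 - D2
    -- bounds
    set nx := nsq x with hnx
    set ny := nsq y with hny
    have hxy : 0 < nx + ny := by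
      rcases Function.ne_iff.mp hv.2 with ⟨i, hi⟩
      cases i with
      | inl i =>
        have : 0 < nx := nsq_pos (fun hc => hi (by simpa [hvel, hc] using congrFun (rfl : v = v) (Sum.inl i) ▸ (show x i = 0 by rw [hc]; rfl)))
        nlinarith [nsq_nonneg y]
      | inr i =>
        have : 0 < ny := nsq_pos (fun hc => hi (by simpa [hvel, hc] using (show y i = 0 by rw [hc]; rfl)))
        nlinarith [nsq_nonneg x]
    have hreqx : C_M * h ^ 2 * nx ≤ qx.re := quad_lower hM.1 x hMmin
    have hreqy : C_M * h ^ 2 * ny ≤ qy.re := quad_lower hM.1 y hMmin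
    have habsA : ‖qA‖ ≤ C_A * (Real.sqrt nx * Real.sqrt ny) :=
      quad_upper hA.1 x y hCA.le
        (fun i => abs_le.mpr ⟨by linarith [hA.eigenvalues_nonneg i], hAmax i⟩)
    have habsB : ‖qB‖ ≤ C_B * (Real.sqrt ny * Real.sqrt nx) :=
      quad_upper hB.1 y x hCB.le
        (fun i => abs_le.mpr ⟨by linarith [hB.eigenvalues_nonneg i], hBmax i⟩)
    have hqsum_re : C_M * h ^ 2 * (nx + ny) ≤ (qx + qy).re := by
      rw [Complex.add_re]; nlinarith
    have hqsum_abs : C_M * h ^ 2 * (nx + ny) ≤ ‖qx + qy‖ :=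
      le_trans hqsum_re (Complex.re_le_norm _)
    have hsqrt : Real.sqrt nx * Real.sqrt ny ≤ (nx + ny) / 2 := by
      nlinarith [sq_nonneg (Real.sqrt nx - Real.sqrt ny), Real.sq_sqrt (nsq_nonneg x),
        Real.sq_sqrt (nsq_nonneg y), hnx, hny]
    have habseq : ‖z - 1‖ * ‖qx + qy‖
        = τ * ‖qA - qB‖ := by
      rw [← norm_mul, key, norm_mul, Complex.norm_real, Real.norm_eq_abs,
        abs_of_pos hτ]
    have hrhs : τ * ‖qA - qB‖ ≤ τ * ((C_A + C_B) * ((nx + ny) / 2)) := by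
      refine mul_le_mul_of_nonneg_left ?_ hτ.le
      calc ‖qA - qB‖ ≤ ‖qA‖ + ‖qB‖ :=
            (norm_sub_le _ _ : _)
        _ ≤ C_A * (Real.sqrt nx * Real.sqrt ny) + C_B * (Real.sqrt ny * Real.sqrt nx) := by
            linarith
        _ ≤ (C_A + C_B) * ((nx + ny) / 2) := by nlinarith [Real.sqrt_nonneg nx, Real.sqrt_nonneg ny]
    have hfin : ‖z - 1‖ * (C_M * h ^ 2 * (nx + ny))
        < 1 * (C_M * h ^ 2 * (nx + ny)) :=
      calc ‖z - 1‖ * (C_M * h ^ 2 * (nx + ny))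
          ≤ ‖z - 1‖ * ‖qx + qy‖ :=
            mul_le_mul_of_nonneg_left hqsum_abs (norm_nonneg _)
        _ = τ * ‖qA - qB‖ := habseq
        _ ≤ τ * ((C_A + C_B) * ((nx + ny) / 2)) := hrhs
        _ < 1 * (C_M * h ^ 2 * (nx + ny)) := by
            nlinarith [mul_pos (sub_pos.mpr hτsum) hxy]
    exact lt_of_mul_lt_mul_right hfin (by positivity)
  have hdet : IsUnit T.det := by
    by_contra hdet
    have hdet0 : T.det = 0 := by_contra fun hne => hdet (isUnit_iff_ne_zero.mpr hne)
    have hdc : Tc.det = (T.det : ℂ) := (RingHom.map_det Complex.ofRealHom T).symm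
    have : ¬ IsUnit Tc := by
      rw [Matrix.isUnit_iff_isUnit_det, hdc, hdet0]
      simp
    have h0 : (0 : ℂ) ∈ spectrum ℂ Tc := (spectrum.zero_mem_iff (R := ℂ)).mpr this
    have := part1 0 h0
    simp at this
  exact ⟨part1, hdet⟩
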